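/- Suppose the analytic system ẋ = Ax + f(x) on ℝⁿ, with f = O(‖x‖²), has eigenvalues λ₁ = 0 and λ₂,...,λₙ all with positive real part (or all with negative real part), and admits an analytic first integral H(x) = x₁ + h(x) with h = O(‖x‖²) near the origin. Then the origin is not an isolated singular point: there is an analytic curve of singular points through the origin. (Proof: take new coordinates u₁ = H(x), v = (x₂,...,xₙ); then u̇₁ ≡ 0, and the implicit function theorem applied to v̇ = Bv + higher order gives a curve of singular points.) -/

import Mathlib

open Polynomial Matrix Filter Topology

lemma aux_charpoly (m : ℕ) (A : Matrix (Fin (m+1)) (Fin (m+1)) ℝ)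
    (hA0 : ∀ j, A 0 j = 0) :
    A.charpoly = X * (A.submatrix Fin.succ Fin.succ).charpoly := by
  have hsub : (charmatrix A).submatrix Fin.succ Fin.succ
      = charmatrix (A.submatrix Fin.succ Fin.succ) := by
    ext i j
    by_cases h : i = j
    · subst h; simp [charmatrix_apply_eq]
    · rw [Matrix.submatrix_apply, charmatrix_apply_ne _ _ _ (fun hc => h (Fin.succ_injective _ hc)),
        charmatrix_apply_ne _ _ _ h, Matrix.submatrix_apply]
  rw [Matrix.charpoly, Matrix.charpoly, Matrix.det_succ_row_zero]
  rw [Finset.sum_eq_single 0]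
  · rw [charmatrix_apply_eq, hA0 0, map_zero, sub_zero]
    simp [Fin.succAbove_zero, hsub]
  · intro j _ hj
    rw [charmatrix_apply_ne _ _ _ (fun hc => hj hc.symm), hA0 j, map_zero, neg_zero]
    ring
  · simp

lemma aux_det (m : ℕ) (A : Matrix (Fin (m+1)) (Fin (m+1)) ℝ) (lam : Fin (m+1) → ℂ)
    (hchar : A.charpoly.map (algebraMap ℝ ℂ) = ∏ i : Fin (m+1), (X - C (lam i)))
    (hcp : A.charpoly = X * (A.submatrix Fin.succ Fin.succ).charpoly)
    (hlam0 : lam 0 = 0) (hlam : ∀ i, i ≠ 0 → lam i ≠ 0) :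
    (A.submatrix Fin.succ Fin.succ).det ≠ 0 := by
  set B := A.submatrix Fin.succ Fin.succ with hB
  have h1 : (X : ℂ[X]) * (B.charpoly.map (algebraMap ℝ ℂ))
      = X * ∏ i ∈ Finset.univ.erase 0, (X - C (lam i)) := by
    rw [← Polynomial.map_X (f := algebraMap ℝ ℂ), ← Polynomial.map_mul, ← hcp, hchar,
      Polynomial.map_X]
    rw [← Finset.mul_prod_erase Finset.univ _ (Finset.mem_univ 0), hlam0]
    simp
  have h2 : B.charpoly.map (algebraMap ℝ ℂ) = ∏ i ∈ Finset.univ.erase 0, (X - C (lam i)) :=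
    mul_left_cancel₀ Polynomial.X_ne_zero h1
  have h3 : (algebraMap ℝ ℂ) (B.charpoly.eval 0) ≠ 0 := by
    rw [← Polynomial.eval_zero_map, h2, Polynomial.eval_prod]
    rw [Finset.prod_ne_zero_iff]
    intro i hi
    simp only [eval_sub, eval_X, eval_C, zero_sub, ne_eq, neg_eq_zero]
    exact hlam i (Finset.ne_of_mem_erase hi)
  have h4 : B.charpoly.eval 0 ≠ 0 := fun h => h3 (by rw [h, map_zero])
  intro hdet
  apply h4
  have := Matrix.det_eq_sign_charpoly_coeff B
  rw [hdet, Polynomial.coeff_zero_eq_eval_zero] at this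
  have h5 : ((-1 : ℝ) ^ Fintype.card (Fin m)) ≠ 0 := by
    simp
  have : (0:ℝ) = (-1) ^ Fintype.card (Fin m) * eval 0 B.charpoly := this
  rcases mul_eq_zero.1 this.symm with h | h
  · exact absurd h h5
  · exact h

lemma aux_row (m : ℕ) (A : Matrix (Fin (m+1)) (Fin (m+1)) ℝ)
    (f : (Fin (m+1) → ℝ) → Fin (m+1) → ℝ)
    (hf : AnalyticAt ℝ f 0) (hf0 : f 0 = 0) (hf1 : fderiv ℝ f 0 = 0)
    (H : (Fin (m+1) → ℝ) → ℝ)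
    (hH : AnalyticAt ℝ H 0)
    (hHlin : fderiv ℝ H 0 = ContinuousLinearMap.proj 0)
    (hfi : ∀ᶠ x in nhds (0 : Fin (m+1) → ℝ),
      fderiv ℝ H x (A.mulVec x + f x) = 0) :
    ∀ j, A 0 j = 0 := by
  have key : ∀ v : Fin (m+1) → ℝ, A.mulVec v 0 = 0 := by
    intro v
    set D : ℝ → ℝ := fun t => (fderiv ℝ H (t • v)) (A.mulVec v + t⁻¹ • f (t • v)) with hD
    -- the map t ↦ t • v tends to 0
    have hsv : Tendsto (fun t : ℝ => t • v) (𝓝[≠] (0:ℝ)) (𝓝 0) := by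
      have : Tendsto (fun t : ℝ => t • v) (𝓝 (0:ℝ)) (𝓝 ((0:ℝ) • v)) :=
        (continuous_id.smul continuous_const).tendsto 0
      rw [zero_smul] at this
      exact this.mono_left nhdsWithin_le_nhds
    -- limit of D
    have hL : Tendsto (fun t : ℝ => fderiv ℝ H (t • v)) (𝓝[≠] (0:ℝ)) (𝓝 (fderiv ℝ H 0)) :=
      (hH.fderiv.continuousAt.tendsto).comp hsv
    have hslope : Tendsto (fun t : ℝ => t⁻¹ • f (t • v)) (𝓝[≠] (0:ℝ)) (𝓝 0) := by
      have hf' : HasFDerivAt f (0 : (Fin (m+1) → ℝ) →L[ℝ] (Fin (m+1) → ℝ)) 0 :=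
        hf1 ▸ hf.differentiableAt.hasFDerivAt
      have hsm : HasDerivAt (fun t : ℝ => t • v) v 0 := by
        simpa using (hasDerivAt_id (0:ℝ)).smul_const v
      have hzv : ((0:ℝ) • v) = 0 := zero_smul _ _
      have hd : HasDerivAt (fun t : ℝ => f (t • v)) 0 0 := by
        have := (hzv ▸ hf' : HasFDerivAt f 0 ((0:ℝ) • v)).comp_hasDerivAt 0 hsm
        exact (by simpa using this : HasDerivAt (f ∘ fun t : ℝ => t • v) 0 0)
      have := hasDerivAt_iff_tendsto_slope.1 hd
      apply this.congr'
      filter_upwards [self_mem_nhdsWithin] with t ht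
      simp [slope, hzv, hf0]
    have hlim : Tendsto D (𝓝[≠] (0:ℝ)) (𝓝 ((fderiv ℝ H 0) (A.mulVec v + 0))) := by
      have hpair : Tendsto (fun t : ℝ => (fderiv ℝ H (t • v), A.mulVec v + t⁻¹ • f (t • v)))
          (𝓝[≠] (0:ℝ)) (𝓝 (fderiv ℝ H 0, A.mulVec v + 0)) :=
        hL.prodMk_nhds (tendsto_const_nhds.add hslope)
      exact (isBoundedBilinearMap_apply.continuous.continuousAt.tendsto).comp hpair
    -- D is eventually 0
    have hzero : D =ᶠ[𝓝[≠] (0:ℝ)] fun _ => 0 := by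
      filter_upwards [hsv.eventually hfi, self_mem_nhdsWithin] with t ht (ht' : t ≠ 0)
      have harg : A.mulVec v + t⁻¹ • f (t • v) = t⁻¹ • (A.mulVec (t • v) + f (t • v)) := by
        rw [smul_add, Matrix.mulVec_smul, smul_smul, inv_mul_cancel₀ ht', one_smul]
      show (fderiv ℝ H (t • v)) (A.mulVec v + t⁻¹ • f (t • v)) = 0
      rw [harg, (fderiv ℝ H (t • v)).map_smul, ht, smul_zero]
    -- conclude
    have h1 : Tendsto (fun _ : ℝ => (0:ℝ)) (𝓝[≠] (0:ℝ)) (𝓝 ((fderiv ℝ H 0) (A.mulVec v + 0))) :=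
      hlim.congr' hzero
    have h2 : ((fderiv ℝ H 0) (A.mulVec v + 0)) = 0 :=
      (tendsto_nhds_unique tendsto_const_nhds h1).symm
    rw [hHlin] at h2
    simpa using h2
  intro j
  have := key (Pi.single j 1)
  rw [show A.mulVec (Pi.single j 1) 0 = A 0 ⬝ᵥ Pi.single j 1 from rfl,
    dotProduct_single] at this
  simpa using this



/-- for the analytic system ẋ = Ax + f(x) with eigenvalues
λ₁ = 0 and λ₂,…,λₙ all of positive (or all of negative) real part, if there is
an analytic first integral H(x) = x₁ + h(x), h = O(‖x‖²), near the origin,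
then the origin is a non-isolated singular point: an analytic curve of
singular points passes through it. -/
theorem stmt17 (n : ℕ) (hn : 2 ≤ n)
    (A : Matrix (Fin n) (Fin n) ℝ)
    (f : (Fin n → ℝ) → Fin n → ℝ)
    (hf : AnalyticAt ℝ f 0) (hf0 : f 0 = 0) (hf1 : fderiv ℝ f 0 = 0)
    (lam : Fin n → ℂ)
    -- λ are the eigenvalues of A, λ₁ = 0
    (hchar : A.charpoly.map (algebraMap ℝ ℂ)
      = ∏ i : Fin n, (Polynomial.X - Polynomial.C (lam i)))
    (hlam0 : lam ⟨0, by omega⟩ = 0)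
    (hsign : (∀ i, i ≠ ⟨0, by omega⟩ → 0 < (lam i).re) ∨
             (∀ i, i ≠ ⟨0, by omega⟩ → (lam i).re < 0))
    -- analytic first integral H(x) = x₁ + h(x), h = O(‖x‖²)
    (H : (Fin n → ℝ) → ℝ)
    (hH : AnalyticAt ℝ H 0) (hH0 : H 0 = 0)
    (hHlin : fderiv ℝ H 0 = ContinuousLinearMap.proj ⟨0, by omega⟩)
    (hfi : ∀ᶠ x in nhds (0 : Fin n → ℝ),
      fderiv ℝ H x (A.mulVec x + f x) = 0) :
    ∃ γ : ℝ → Fin n → ℝ, AnalyticAt ℝ γ 0 ∧ γ 0 = 0 ∧ deriv γ 0 ≠ 0 ∧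
      ∀ᶠ t in nhds (0 : ℝ), A.mulVec (γ t) + f (γ t) = 0 := by
  obtain ⟨m, rfl⟩ : ∃ m, n = m + 1 := ⟨n - 1, by omega⟩
  have hz : (⟨0, by omega⟩ : Fin (m+1)) = 0 := rfl
  rw [hz] at hlam0 hHlin
  rw [hz] at hsign
  -- row 0 of A vanishes
  have hA0 : ∀ j, A 0 j = 0 := aux_row m A f hf hf0 hf1 H hH hHlin hfi
  -- the lower-right block has nonzero determinant
  have hlamne : ∀ i : Fin (m+1), i ≠ 0 → lam i ≠ 0 := by
    intro i hi h0
    rcases hsign with hs | hs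
    · have := hs i hi; rw [h0] at this; simp at this
    · have := hs i hi; rw [h0] at this; simp at this
  have hdetB : (A.submatrix Fin.succ Fin.succ).det ≠ 0 :=
    aux_det m A lam hchar (aux_charpoly m A hA0) hlam0 hlamne
  -- the matrix M : derivative of Ψ at 0
  set M : Matrix (Fin (m+1)) (Fin (m+1)) ℝ := A.updateRow 0 (Pi.single 0 1) with hM
  have hrow0 : ∀ x : Fin (m+1) → ℝ, M.mulVec x 0 = x 0 := by
    intro x
    show M 0 ⬝ᵥ x = x 0
    rw [hM, Matrix.updateRow_self, single_dotProduct, one_mul]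
  have hrows : ∀ (x : Fin (m+1) → ℝ) (i : Fin m),
      M.mulVec x (Fin.succ i) = A.mulVec x (Fin.succ i) := by
    intro x i
    show M (Fin.succ i) ⬝ᵥ x = A (Fin.succ i) ⬝ᵥ x
    rw [hM, Matrix.updateRow_ne (Fin.succ_ne_zero i)]
  have hdetM : M.det ≠ 0 := by
    have hsub : M.submatrix Fin.succ (Fin.succAbove 0) = A.submatrix Fin.succ Fin.succ := by
      ext i j
      rw [Fin.succAbove_zero]
      simp [hM, Matrix.updateRow_ne (Fin.succ_ne_zero i)]
    rw [Matrix.det_succ_row_zero, Finset.sum_eq_single 0]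
    · rw [hsub]
      simp [hM, Matrix.updateRow_self, hdetB]
    · intro j _ hj
      rw [hM]
      simp [Matrix.updateRow_self, Pi.single_eq_of_ne hj]
    · simp
  -- the continuous linear map L₀ and equivalence e
  set L₀ : (Fin (m+1) → ℝ) →L[ℝ] (Fin (m+1) → ℝ) :=
    LinearMap.toContinuousLinearMap (Matrix.toLin' M) with hL₀def
  have hL₀ : ∀ x, L₀ x = M.mulVec x := fun x => Matrix.toLin'_apply M x
  have hdetL : L₀.det ≠ 0 := by
    have : (L₀ : (Fin (m+1) → ℝ) →ₗ[ℝ] (Fin (m+1) → ℝ)) = Matrix.toLin' M := by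
      rw [hL₀def]; exact LinearMap.coe_toContinuousLinearMap _
    rw [ContinuousLinearMap.det, this, LinearMap.det_toLin']
    exact hdetM
  set e := L₀.toContinuousLinearEquivOfDetNeZero hdetL with he
  -- the map Ψ
  set e₀ : Fin (m+1) → ℝ := Pi.single 0 1 with he₀
  set singleCLM : ℝ →L[ℝ] (Fin (m+1) → ℝ) :=
    LinearMap.toContinuousLinearMap (LinearMap.single ℝ (fun _ : Fin (m+1) => ℝ) 0) with hsdef
  have hsingleCLM : ∀ c : ℝ, singleCLM c = Pi.single 0 c := fun c => rfl
  set g : (Fin (m+1) → ℝ) → ℝ := fun x => H x - x 0 - f x 0 with hgdef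
  set Ψ : (Fin (m+1) → ℝ) → (Fin (m+1) → ℝ) := fun x => L₀ x + (f x + singleCLM (g x)) with hΨdef
  have hΨ0 : ∀ x, Ψ x 0 = H x := by
    intro x
    show L₀ x 0 + (f x 0 + singleCLM (g x) 0) = H x
    rw [hL₀ x, hrow0 x, hsingleCLM, Pi.single_eq_same, hgdef]
    ring
  have hΨs : ∀ (x) (i : Fin m),
      Ψ x (Fin.succ i) = A.mulVec x (Fin.succ i) + f x (Fin.succ i) := by
    intro x i
    show L₀ x (Fin.succ i) + (f x (Fin.succ i) + singleCLM (g x) (Fin.succ i))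
      = A.mulVec x (Fin.succ i) + f x (Fin.succ i)
    rw [hL₀ x, hrows x i, hsingleCLM, Pi.single_eq_of_ne (Fin.succ_ne_zero i)]
    ring
  -- analyticity of Ψ
  have hproj_an : AnalyticAt ℝ (fun x : Fin (m+1) → ℝ => x 0) (0 : Fin (m+1) → ℝ) :=
    (ContinuousLinearMap.proj (R := ℝ) (φ := fun _ : Fin (m+1) => ℝ) 0).analyticAt 0
  have hfp_an : AnalyticAt ℝ (fun x : Fin (m+1) → ℝ => f x 0) 0 := by
    have := ((ContinuousLinearMap.proj (R := ℝ) (φ := fun _ : Fin (m+1) => ℝ) 0).analyticAt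
      (f 0)).comp hf
    exact this
  have hg_an : AnalyticAt ℝ g 0 := (hH.sub hproj_an).sub hfp_an
  have hΨan : AnalyticAt ℝ Ψ 0 :=
    (L₀.analyticAt 0).add (hf.add (((singleCLM.analyticAt (g 0)).comp hg_an)))
  -- derivative of Ψ at 0
  have hf' : HasFDerivAt f (0 : (Fin (m+1) → ℝ) →L[ℝ] (Fin (m+1) → ℝ)) 0 :=
    hf1 ▸ hf.differentiableAt.hasFDerivAt
  have hH' : HasFDerivAt H (ContinuousLinearMap.proj (R := ℝ) (φ := fun _ : Fin (m+1) => ℝ) 0)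
      (0 : Fin (m+1) → ℝ) := hHlin ▸ hH.differentiableAt.hasFDerivAt
  have hgd : HasFDerivAt g (0 : (Fin (m+1) → ℝ) →L[ℝ] ℝ) 0 := by
    have h1 := (ContinuousLinearMap.proj (R := ℝ) (φ := fun _ : Fin (m+1) => ℝ)
      0).hasFDerivAt (x := (0 : Fin (m+1) → ℝ))
    have h2 : HasFDerivAt (fun x : Fin (m+1) → ℝ => f x 0)
        ((ContinuousLinearMap.proj (R := ℝ) (φ := fun _ : Fin (m+1) => ℝ) 0).comp
          (0 : (Fin (m+1) → ℝ) →L[ℝ] (Fin (m+1) → ℝ))) 0 := by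
      have := (ContinuousLinearMap.proj (R := ℝ) (φ := fun _ : Fin (m+1) => ℝ) 0).hasFDerivAt
        (x := f 0) |>.comp 0 hf'
      exact this
    have h3 := (hH'.sub h1).sub h2
    have : (ContinuousLinearMap.proj (R := ℝ) (φ := fun _ : Fin (m+1) => ℝ) 0
        - ContinuousLinearMap.proj 0
        - (ContinuousLinearMap.proj (R := ℝ) (φ := fun _ : Fin (m+1) => ℝ) 0).comp
          (0 : (Fin (m+1) → ℝ) →L[ℝ] (Fin (m+1) → ℝ))) = 0 := by
      ext x; simp
    rwa [this] at h3
  have hΨd : HasFDerivAt Ψ L₀ 0 := by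
    have h1 := (L₀.hasFDerivAt (x := (0 : Fin (m+1) → ℝ))).add
      (hf'.add ((singleCLM.hasFDerivAt (x := g 0)).comp 0 hgd))
    have : (L₀ + ((0 : (Fin (m+1) → ℝ) →L[ℝ] (Fin (m+1) → ℝ))
        + singleCLM.comp (0 : (Fin (m+1) → ℝ) →L[ℝ] ℝ))) = L₀ := by
      ext x j; simp
    rwa [this] at h1
  have hΨfderiv : fderiv ℝ Ψ 0 = L₀ := hΨd.fderiv
  -- inverse function theorem
  have hstrict : HasStrictFDerivAt Ψ
      ((e : (Fin (m+1) → ℝ) →L[ℝ] (Fin (m+1) → ℝ))) 0 := by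
    have := hΨan.hasStrictFDerivAt
    rw [hΨfderiv] at this
    rwa [he, ContinuousLinearMap.coe_toContinuousLinearEquivOfDetNeZero]
  set P := hstrict.toOpenPartialHomeomorph Ψ with hP
  have h0src : (0 : Fin (m+1) → ℝ) ∈ P.source := hstrict.mem_toOpenPartialHomeomorph_source
  have hPcoe : ⇑P = Ψ := hstrict.toOpenPartialHomeomorph_coe
  have hΨ0v : Ψ 0 = 0 := by
    have hg0 : g 0 = 0 := by rw [hgdef]; simp [hH0, hf0]
    show L₀ 0 + (f 0 + singleCLM (g 0)) = 0
    rw [hg0, hf0, map_zero, map_zero]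
    simp
  have hP00 : (⇑P) 0 = 0 := by rw [hPcoe, hΨ0v]
  have hsymm_an : AnalyticAt ℝ (⇑P.symm) 0 := by
    have h1 : AnalyticAt ℝ (⇑P) 0 := by rw [hPcoe]; exact hΨan
    have h2 : fderiv ℝ (⇑P) 0 = (e : (Fin (m+1) → ℝ) →L[ℝ] (Fin (m+1) → ℝ)) := by
      rw [hPcoe, hΨfderiv, he, ContinuousLinearMap.coe_toContinuousLinearEquivOfDetNeZero]
    have := P.analyticAt_symm' h0src h1 h2
    rwa [hP00] at this
  -- the curve γ
  set γ : ℝ → Fin (m+1) → ℝ := fun t => P.symm (t • e₀) with hγdef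
  have hinner_an : AnalyticAt ℝ (fun t : ℝ => t • e₀) 0 :=
    analyticAt_id.smul analyticAt_const
  have hγan : AnalyticAt ℝ γ 0 := by
    apply AnalyticAt.comp (g := ⇑P.symm) (f := fun t : ℝ => t • e₀) ?_ hinner_an
    simpa using hsymm_an
  have hγ0 : γ 0 = 0 := by
    show P.symm ((0:ℝ) • e₀) = 0
    rw [zero_smul]
    conv_lhs => rw [← hP00]
    exact P.left_inv h0src
  -- eventually Ψ (γ t) = t • e₀
  have hcont_inner : Tendsto (fun t : ℝ => t • e₀) (𝓝 0) (𝓝 0) := by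
    have : Tendsto (fun t : ℝ => t • e₀) (𝓝 (0:ℝ)) (𝓝 ((0:ℝ) • e₀)) :=
      (continuous_id.smul continuous_const).tendsto 0
    rwa [zero_smul] at this
  have hΨγ : ∀ᶠ t in 𝓝 (0:ℝ), Ψ (γ t) = t • e₀ := by
    have h1 := P.eventually_right_inverse' h0src
    rw [hP00] at h1
    filter_upwards [hcont_inner.eventually h1] with t ht
    rw [← hPcoe]
    exact ht
  -- γ tendsto 0
  have hγcont : Tendsto γ (𝓝 (0:ℝ)) (𝓝 0) := by
    have := hγan.continuousAt.tendsto
    rwa [hγ0] at this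
  -- the singular-point property
  have hfiγ : ∀ᶠ t in 𝓝 (0:ℝ), fderiv ℝ H (γ t) (A.mulVec (γ t) + f (γ t)) = 0 :=
    hγcont.eventually hfi
  have hcne : ∀ᶠ t in 𝓝 (0:ℝ), fderiv ℝ H (γ t) e₀ ≠ 0 := by
    have h1 : Tendsto (fun t => fderiv ℝ H (γ t)) (𝓝 (0:ℝ)) (𝓝 (fderiv ℝ H 0)) :=
      (hH.fderiv.continuousAt.tendsto).comp hγcont
    have h2 : Tendsto (fun t => fderiv ℝ H (γ t) e₀) (𝓝 (0:ℝ)) (𝓝 (fderiv ℝ H 0 e₀)) := by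
      exact ((isBoundedBilinearMap_apply.continuous.continuousAt
        (x := (fderiv ℝ H 0, e₀))).tendsto).comp (h1.prodMk_nhds tendsto_const_nhds)
    have h3 : fderiv ℝ H 0 e₀ = 1 := by
      rw [hHlin]
      show e₀ 0 = 1
      rw [he₀, Pi.single_eq_same]
    rw [h3] at h2
    exact h2.eventually_ne one_ne_zero
  have hfinal : ∀ᶠ t in 𝓝 (0:ℝ), A.mulVec (γ t) + f (γ t) = 0 := by
    filter_upwards [hΨγ, hfiγ, hcne] with t h1 h2 h3
    have hsucc : ∀ i : Fin m, (A.mulVec (γ t) + f (γ t)) (Fin.succ i) = 0 := by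
      intro i
      have := congrFun h1 (Fin.succ i)
      rw [hΨs] at this
      rw [Pi.add_apply, this]
      show (t • e₀) (Fin.succ i) = 0
      rw [Pi.smul_apply, he₀, Pi.single_eq_of_ne (Fin.succ_ne_zero i), smul_zero]
    set w := A.mulVec (γ t) + f (γ t) with hw
    have hwP : w = Pi.single 0 (w 0) := by
      funext j
      refine Fin.cases ?_ ?_ j
      · rw [Pi.single_eq_same]
      · intro i
        rw [Pi.single_eq_of_ne (Fin.succ_ne_zero i)]
        exact hsucc i
    have hws : Pi.single (0 : Fin (m+1)) (w 0) = (w 0) • e₀ := by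
      rw [he₀, ← Pi.single_smul, smul_eq_mul, mul_one]
    have hmul : (w 0) * (fderiv ℝ H (γ t) e₀) = 0 := by
      have h4 : fderiv ℝ H (γ t) w = 0 := h2
      rw [hwP, hws] at h4
      rwa [(fderiv ℝ H (γ t)).map_smul, smul_eq_mul] at h4
    have hw0 : w 0 = 0 := by
      rcases mul_eq_zero.1 hmul with h | h
      · exact h
      · exact absurd h h3
    calc A.mulVec (γ t) + f (γ t) = w := hw.symm
      _ = Pi.single 0 (w 0) := hwP
      _ = 0 := by rw [hw0]; simp
  -- nonvanishing derivative
  have hHγ : ∀ᶠ t in 𝓝 (0:ℝ), H (γ t) = t := by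
    filter_upwards [hΨγ] with t h1
    have := congrFun h1 0
    rw [hΨ0] at this
    rw [this]
    show (t • e₀) 0 = t
    rw [Pi.smul_apply, he₀, Pi.single_eq_same, smul_eq_mul, mul_one]
  have hdne : deriv γ 0 ≠ 0 := by
    intro hcontra
    have hd : HasDerivAt γ (deriv γ 0) 0 := hγan.differentiableAt.hasDerivAt
    have hH'' : HasFDerivAt H (ContinuousLinearMap.proj (R := ℝ)
        (φ := fun _ : Fin (m+1) => ℝ) 0) (γ 0) := by rw [hγ0]; exact hH'
    have hcomp := hH''.comp_hasDerivAt 0 hd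
    have hido : HasDerivAt (fun t : ℝ => t)
        ((ContinuousLinearMap.proj (R := ℝ) (φ := fun _ : Fin (m+1) => ℝ) 0)
          (deriv γ 0)) 0 := by
      apply hcomp.congr_of_eventuallyEq
      filter_upwards [hHγ] with t ht
      exact ht.symm
    have h1 : (ContinuousLinearMap.proj (R := ℝ) (φ := fun _ : Fin (m+1) => ℝ) 0)
        (deriv γ 0) = 1 := hido.unique (hasDerivAt_id' 0)
    rw [hcontra] at h1
    simp at h1
  exact ⟨γ, hγan, hγ0, hdne, hfinal⟩
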